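/- If 0 < ω < ω_{p,q}, then there exist real numbers 0 < b < c such that f(u) < 0 for u ∈ (0,b), f(b) = 0, f(u) > 0 for u ∈ (b,c), f(c) = 0, and f(u) < 0 for u ∈ (c,∞). -/

import Mathlib

/-- The double power nonlinearity `f(u) = -ω u + u^p - u^q`. -/
noncomputable def f (ω p q u : ℝ) : ℝ := -ω * u + u ^ p - u ^ q

/-- The critical frequency `ω_{p,q}`. -/
noncomputable def omegaPQ (p q : ℝ) : ℝ :=
  (2 * (q - p) / ((p + 1) * (q - 1))) *
    (((p - 1) * (q + 1)) / ((p + 1) * (q - 1))) ^ ((p - 1) / (q - p))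

open Real Set

private lemma g_hasDeriv {α β : ℝ} (u : ℝ) (hu : 0 < u) :
    HasDerivAt (fun x : ℝ => x ^ α - x ^ β) (α * u ^ (α - 1) - β * u ^ (β - 1)) u :=
  (Real.hasDerivAt_rpow_const (p := α) (Or.inl hu.ne')).sub
    (Real.hasDerivAt_rpow_const (p := β) (Or.inl hu.ne'))

private lemma g_cont {α β : ℝ} (hα : 0 < α) (hβ : 0 < β) :
    Continuous (fun x : ℝ => x ^ α - x ^ β) :=
  (Real.continuous_rpow_const hα.le).sub (Real.continuous_rpow_const hβ.le)

private lemma ustar_rpow {α β : ℝ} (hα : 0 < α) (hαβ : α < β) :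
    (((α / β) ^ (β - α)⁻¹ : ℝ)) ^ (β - α) = α / β :=
  Real.rpow_inv_rpow (div_pos hα (hα.trans hαβ)).le (by intro h; exact absurd (sub_eq_zero.mp h).symm hαβ.ne)

private lemma g_mono {α β : ℝ} (hα : 0 < α) (hαβ : α < β) :
    StrictMonoOn (fun x : ℝ => x ^ α - x ^ β) (Icc 0 ((α / β) ^ (β - α)⁻¹)) := by
  have hβ : 0 < β := hα.trans hαβ
  apply strictMonoOn_of_deriv_pos (convex_Icc _ _) ((g_cont hα hβ).continuousOn)
  intro u hu
  rw [interior_Icc] at hu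
  have hu0 : 0 < u := hu.1
  rw [(g_hasDeriv u hu0).deriv]
  have hkey : u ^ (β - α) < α / β := by
    calc u ^ (β - α) < ((α / β) ^ (β - α)⁻¹) ^ (β - α) :=
          Real.rpow_lt_rpow hu0.le hu.2 (by linarith)
      _ = α / β := ustar_rpow hα hαβ
  have hsplit : u ^ (β - 1) = u ^ (α - 1) * u ^ (β - α) := by
    rw [← Real.rpow_add hu0]; ring_nf
  rw [hsplit]
  have h1 : 0 < u ^ (α - 1) := Real.rpow_pos_of_pos hu0 _
  have h2 : β * u ^ (β - α) < α := by
    have := (lt_div_iff₀ hβ).mp hkey; linarith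
  nlinarith

private lemma g_anti {α β : ℝ} (hα : 0 < α) (hαβ : α < β) :
    StrictAntiOn (fun x : ℝ => x ^ α - x ^ β) (Ici ((α / β) ^ (β - α)⁻¹)) := by
  have hβ : 0 < β := hα.trans hαβ
  have hstar : (0:ℝ) < (α / β) ^ (β - α)⁻¹ := by positivity
  apply strictAntiOn_of_deriv_neg (convex_Ici _) ((g_cont hα hβ).continuousOn)
  intro u hu
  rw [interior_Ici] at hu
  have hu0 : 0 < u := hstar.trans hu
  rw [(g_hasDeriv u hu0).deriv]
  have hkey : α / β < u ^ (β - α) := by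
    calc α / β = (((α / β) ^ (β - α)⁻¹ : ℝ)) ^ (β - α) := (ustar_rpow hα hαβ).symm
      _ < u ^ (β - α) := Real.rpow_lt_rpow hstar.le hu (by linarith)
  have hsplit : u ^ (β - 1) = u ^ (α - 1) * u ^ (β - α) := by
    rw [← Real.rpow_add hu0]; ring_nf
  rw [hsplit]
  have h1 : 0 < u ^ (α - 1) := Real.rpow_pos_of_pos hu0 _
  have h2 : α < β * u ^ (β - α) := by
    have := (div_lt_iff₀ hβ).mp hkey; linarith
  nlinarith

/-- If `0 < ω < ω_{p,q}`, then there exist `0 < b < c` such that `f < 0` on `(0,b)`,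
`f(b) = 0`, `f > 0` on `(b,c)`, `f(c) = 0`, and `f < 0` on `(c,∞)`. -/
theorem f_sign_structure (p q ω : ℝ) (hp : 1 < p) (hpq : p < q) (hω : 0 < ω)
    (hωpq : ω < omegaPQ p q) :
    ∃ b c : ℝ, 0 < b ∧ b < c ∧
      (∀ u, 0 < u → u < b → f ω p q u < 0) ∧
      f ω p q b = 0 ∧
      (∀ u, b < u → u < c → 0 < f ω p q u) ∧
      f ω p q c = 0 ∧
      (∀ u, c < u → f ω p q u < 0) := by
  have hq : 1 < q := hp.trans hpq
  set α : ℝ := p - 1 with hαdef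
  set β : ℝ := q - 1 with hβdef
  have hα : 0 < α := by simp [hαdef]; linarith
  have hβ : 0 < β := by simp [hβdef]; linarith
  have hαβ : α < β := by simp [hαdef, hβdef]; linarith
  set g : ℝ → ℝ := fun x => x ^ α - x ^ β with hgdef
  -- f u = u * (g u - ω) for u > 0
  have f_eq : ∀ u : ℝ, 0 < u → f ω p q u = u * (g u - ω) := by
    intro u hu
    have hup : u ^ p = u * u ^ α := by
      have : u ^ p = u ^ (1 + α) := by rw [hαdef]; ring_nf
      rw [this, Real.rpow_add hu, Real.rpow_one]
    have huq : u ^ q = u * u ^ β := by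
      have : u ^ q = u ^ (1 + β) := by rw [hβdef]; ring_nf
      rw [this, Real.rpow_add hu, Real.rpow_one]
    simp only [f, hgdef, hup, huq]; ring
  -- the witness point w with g w = omegaPQ
  set k : ℝ := ((p - 1) * (q + 1)) / ((p + 1) * (q - 1)) with hkdef
  have hk : 0 < k := by
    apply div_pos <;> nlinarith
  set w : ℝ := k ^ (q - p)⁻¹ with hwdef
  have hw : 0 < w := Real.rpow_pos_of_pos hk _
  have hqp : (0:ℝ) < q - p := by linarith
  have hgw : g w = omegaPQ p q := by
    have hwα : w ^ α = k ^ ((q - p)⁻¹ * α) := by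
      rw [hwdef, ← Real.rpow_mul hk.le]
    have hwβ : w ^ β = k ^ ((q - p)⁻¹ * α) * k := by
      rw [hwdef, ← Real.rpow_mul hk.le]
      have : (q - p)⁻¹ * β = (q - p)⁻¹ * α + 1 := by
        have : β = α + (q - p) := by rw [hαdef, hβdef]; ring
        rw [this]; field_simp
      rw [this, Real.rpow_add hk, Real.rpow_one]
    have hone_sub : 1 - k = 2 * (q - p) / ((p + 1) * (q - 1)) := by
      have hp1 : p + 1 ≠ 0 := by linarith
      have hq1 : q - 1 ≠ 0 := sub_ne_zero.mpr hq.ne'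
      rw [hkdef]; field_simp; ring
    have hexp : (q - p)⁻¹ * α = (p - 1) / (q - p) := by
      rw [hαdef]; field_simp
    simp only [hgdef, hwα, hwβ, omegaPQ, ← hkdef, hexp]
    have : k ^ ((p-1)/(q-p)) - k ^ ((p-1)/(q-p)) * k = k ^ ((p-1)/(q-p)) * (1 - k) := by ring
    rw [this, hone_sub]; ring
  -- the maximum point
  set s : ℝ := (α / β) ^ (β - α)⁻¹ with hsdef
  have hs : 0 < s := by positivity
  have hmono : StrictMonoOn g (Icc 0 s) := g_mono hα hαβ
  have hanti : StrictAntiOn g (Ici s) := g_anti hα hαβ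
  have hgs : ω < g s := by
    have hle : g w ≤ g s := by
      rcases le_total w s with h | h
      · rcases eq_or_lt_of_le h with h' | h'
        · rw [h']
        · exact (hmono ⟨hw.le, h⟩ ⟨hs.le, le_refl _⟩ h').le
      · rcases eq_or_lt_of_le h with h' | h'
        · rw [h']
        · exact (hanti (self_mem_Ici) h h').le
    calc ω < omegaPQ p q := hωpq
      _ = g w := hgw.symm
      _ ≤ g s := hle
  have hg0 : g 0 = 0 := by
    simp [hgdef, Real.zero_rpow hα.ne', Real.zero_rpow hβ.ne']
  -- root b in (0, s)
  have hcont : Continuous g := g_cont hα hβ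
  obtain ⟨b, hbmem, hgb⟩ : ∃ b ∈ Ioo (0:ℝ) s, g b = ω := by
    have := intermediate_value_Ioo hs.le hcont.continuousOn
      (show ω ∈ Ioo (g 0) (g s) by rw [hg0]; exact ⟨hω, hgs⟩)
    obtain ⟨b, hb, hgb⟩ := this
    exact ⟨b, hb, hgb⟩
  -- root c in (s, R)
  set R : ℝ := max s 1 + 1 with hRdef
  have hR1 : (1:ℝ) < R := by
    rw [hRdef]; linarith [le_max_right s 1]
  have hRs : s < R := by
    rw [hRdef]; linarith [le_max_left s 1]
  have hgR : g R < 0 := by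
    simp only [hgdef, sub_neg]
    exact (Real.rpow_lt_rpow_left_iff hR1).mpr hαβ
  obtain ⟨c, hcmem, hgc⟩ : ∃ c ∈ Ioo s R, g c = ω := by
    have := intermediate_value_Ioo' hRs.le hcont.continuousOn
      (show ω ∈ Ioo (g R) (g s) from ⟨hgR.trans hω, hgs⟩)
    obtain ⟨c, hc, hgc⟩ := this
    exact ⟨c, hc, hgc⟩
  have hb0 : 0 < b := hbmem.1
  have hbs : b < s := hbmem.2
  have hsc : s < c := hcmem.1
  refine ⟨b, c, hb0, hbs.trans hsc, ?_, ?_, ?_, ?_, ?_⟩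
  · -- f < 0 on (0, b)
    intro u hu hub
    rw [f_eq u hu]
    apply mul_neg_of_pos_of_neg hu
    have : g u < g b := hmono ⟨hu.le, (hub.trans hbs).le⟩ ⟨hb0.le, hbs.le⟩ hub
    rw [hgb] at this; linarith
  · rw [f_eq b hb0, hgb]; ring
  · -- f > 0 on (b, c)
    intro u hbu huc
    have hu : 0 < u := hb0.trans hbu
    rw [f_eq u hu]
    apply mul_pos hu
    rcases le_total u s with h | h
    · have : g b < g u := hmono ⟨hb0.le, hbs.le⟩ ⟨hu.le, h⟩ hbu
      rw [hgb] at this; linarith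
    · have : g c < g u := by
        apply hanti h (show c ∈ Ici s from (hsc.le)) huc
      rw [hgc] at this; linarith
  · rw [f_eq c (hs.trans hsc), hgc]; ring
  · -- f < 0 on (c, ∞)
    intro u hcu
    have hu : 0 < u := hs.trans (hsc.trans hcu)
    rw [f_eq u hu]
    apply mul_neg_of_pos_of_neg hu
    have : g u < g c := hanti hsc.le (hsc.trans hcu).le hcu
    rw [hgc] at this; linarith
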